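/- Let x, y, z be integers with 0 < x < y < z and gcd(x, y, z) = 1. If 2(y − x)(z − x) = yz and (y − x)(z − y) divides xz (i.e. xz/((y − x)(z − y)) is an integer), then z = y + 1. -/

import Mathlib

/-- If `0 < x < y < z`, `gcd(x, y, z) = 1`, `2(y − x)(z − x) = yz` (i.e. `π_1 = 2`
for the degree sequence `(0, x, y, z)`), and `(y − x)(z − y)` divides `xz`
(i.e. `π_2` is an integer), then `z = y + 1`. -/
theorem z_eq_y_add_one_of_pi_one_eq_two
    (x y z : ℤ) (hx : 0 < x) (hxy : x < y) (hyz : y < z)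
    (hgcd : Int.gcd x (Int.gcd y z) = 1)
    (heq : 2 * (y - x) * (z - x) = y * z)
    (hdvd : (y - x) * (z - y) ∣ x * z) :
    z = y + 1 := by
  have hyx : (0:ℤ) < y - x := by linarith
  have ht : (0:ℤ) < z - y := by linarith
  have key : (y - 2*x) * (z - 2*x) = 2 * x^2 := by linear_combination heq
  have hxz : x * z = (z - 2*x) * (y - x) := by linear_combination -heq
  have hd2 : (z - y) ∣ (z - 2*x) := by
    obtain ⟨c, hc⟩ : (y - x) * (z - y) ∣ (z - 2*x) * (y - x) := hxz ▸ hdvd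
    exact ⟨c, mul_right_cancel₀ (ne_of_gt hyx) (by linear_combination hc)⟩
  have hd1 : (z - y) ∣ (y - 2*x) := by
    obtain ⟨c, hc⟩ := hd2
    exact ⟨c - 1, by linarith [hc, mul_sub (z - y) c 1]⟩
  have hsq : (z - y) * (z - y) ∣ 2 * x^2 := key ▸ mul_dvd_mul hd1 hd2
  -- coprimality of z - y and x
  have hgt : ((Int.gcd (z - y) x : ℤ)) ∣ (z - y) := Int.gcd_dvd_left _ _
  have hgx : ((Int.gcd (z - y) x : ℤ)) ∣ x := Int.gcd_dvd_right _ _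
  have hgy : ((Int.gcd (z - y) x : ℤ)) ∣ y := by
    have h := dvd_add (hgt.trans hd1) (hgx.mul_left 2)
    simpa using h
  have hgz : ((Int.gcd (z - y) x : ℤ)) ∣ z := by
    have h := dvd_add (hgt.trans hd2) (hgx.mul_left 2)
    simpa using h
  have hg1 : Int.gcd (z - y) x = 1 := by
    have h1 : ((Int.gcd (z - y) x : ℤ)) ∣ (Int.gcd x (Int.gcd y z) : ℤ) :=
      Int.dvd_coe_gcd hgx (Int.dvd_coe_gcd hgy hgz)
    rw [hgcd] at h1
    exact_mod_cast Int.eq_one_of_dvd_one (by positivity) h1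
  have hco : IsCoprime (z - y) x := Int.isCoprime_iff_gcd_eq_one.mpr hg1
  have hco2 : IsCoprime ((z - y) * (z - y)) (x ^ 2) := (hco.mul_left hco).pow_right
  have h2 : (z - y) * (z - y) ∣ 2 := hco2.dvd_of_dvd_mul_right hsq
  have hle : (z - y) * (z - y) ≤ 2 := Int.le_of_dvd (by norm_num) h2
  have : z - y ≤ 1 := by nlinarith
  linarith
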